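/- The assignment which is the identity on objects and sends a morphism of pointed finite sets α : A → B in Γ to the pointed function α̃ : A₋ ⊔ {b₀} → B₋ ⊔ {a₀} obtained as the composite A₋ ⊔ {b₀} ≅ A → (α) → B ≅ B₋ ⊔ {a₀} (where each ≅ is the canonical bijection exchanging the indicated basepoints and equal to the identity elsewhere) defines a functor Γ → Γ̃, and this functor is an equivalence of categories. In particular Γ̃, with its twisted composition law, is a well-defined category. -/

import Mathlib

/-!
STATEMENT 0: The assignment which is the identity on objects and sends a morphism
α : A → B of pointed finite sets to the twisted morphism
α̃ : A₋ ⊔ {b₀} → B₋ ⊔ {a₀} (composite of the canonical basepoint-exchanging bijections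
with α) defines a functor Γ → Γ̃, and this functor is an equivalence of categories.
In particular Γ̃, with its twisted composition law, is a well-defined category
(witnessed below by the `Category` instance on `GammaTilde`).

Here `A₋ ⊔ {b₀}` is encoded as `Option A₋` with `none` standing for the adjoined
basepoint; under this encoding the twisted composition of Γ̃ is composition of
`none`-preserving functions.
-/

open CategoryTheory

attribute [local instance] Classical.propDecidable

/-- A pointed finite set. -/
structure PFin where
  carrier : Type
  [fin : Fintype carrier]
  pt : carrier

attribute [instance] PFin.fin

/-- Γ: the category of pointed finite sets and pointed maps. -/
instance : Category PFin where
  Hom A B := {f : A.carrier → B.carrier // f A.pt = B.pt}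
  id A := ⟨_root_.id, rfl⟩
  comp f g := ⟨g.1 ∘ f.1, by simp [f.2, g.2]⟩
  id_comp f := Subtype.ext rfl
  comp_id f := Subtype.ext rfl
  assoc f g h := Subtype.ext rfl

/-- `A₋`: the underlying set of `A` with the basepoint removed. -/
def PFin.minus (A : PFin) : Type := {a : A.carrier // a ≠ A.pt}

noncomputable instance (A : PFin) : Fintype A.minus := by
  classical exact Subtype.fintype _

/-- Γ̃: same objects as Γ. A morphism from `A` to `B` is a pointed function
`A₋ ⊔ {b₀} → B₋ ⊔ {a₀}`; in the `Option` encoding (`none` = adjoined basepoint) the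
twisted composition law becomes composition of `none`-preserving functions, since the
canonical bijections exchanging basepoints are identities in this encoding. -/
def GammaTilde : Type 1 := PFin

/-- The twisted category structure on Γ̃. -/
instance : Category GammaTilde where
  Hom A B := {f : Option (PFin.minus A) → Option (PFin.minus B) // f none = none}
  id A := ⟨_root_.id, rfl⟩
  comp f g := ⟨g.1 ∘ f.1, by simp [f.2, g.2]⟩
  id_comp f := Subtype.ext rfl
  comp_id f := Subtype.ext rfl
  assoc f g h := Subtype.ext rfl

/-- The canonical bijection `A₋ ⊔ {b₀} ≅ A`: the identity on `A₋`, sending the adjoined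
basepoint (`none`) to the basepoint of `A`. -/
def fromOpt (A : PFin) : Option (PFin.minus A) → A.carrier :=
  fun x => x.elim A.pt Subtype.val

/-- The canonical bijection `B ≅ B₋ ⊔ {a₀}`: the identity away from the basepoint,
sending the basepoint of `B` to the adjoined basepoint (`none`). -/
noncomputable def toOpt (B : PFin) : B.carrier → Option (PFin.minus B) :=
  fun b => if h : b = B.pt then none else some ⟨b, h⟩

/-- The twisted morphism `α̃` associated to a pointed map `α : A → B`: the composite
`A₋ ⊔ {b₀} ≅ A → B ≅ B₋ ⊔ {a₀}` of `α` with the canonical basepoint-exchanging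
bijections. -/
noncomputable def twistHom {A B : PFin} (α : A ⟶ B) :
    (show GammaTilde from A) ⟶ (show GammaTilde from B) :=
  ⟨fun x => toOpt B (α.1 (fromOpt A x)), by
    classical simp [toOpt, fromOpt, Option.elim, α.2]⟩


lemma fromOpt_toOpt (A : PFin) (a : A.carrier) : fromOpt A (toOpt A a) = a := by
  classical
  by_cases h : a = A.pt <;> simp [toOpt, fromOpt, Option.elim, h]

lemma toOpt_fromOpt (A : PFin) (x : Option (PFin.minus A)) : toOpt A (fromOpt A x) = x := by
  classical
  cases x with
  | none => simp [toOpt, fromOpt, Option.elim]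
  | some a => simp [toOpt, fromOpt, Option.elim, a.2]; rfl

noncomputable def twistF : PFin ⥤ GammaTilde where
  obj A := A
  map α := twistHom α
  map_id A := by
    apply Subtype.ext
    funext x
    exact toOpt_fromOpt A x
  map_comp {A B C} f g := by
    apply Subtype.ext
    funext x
    show toOpt C (g.1 (f.1 (fromOpt A x))) = toOpt C (g.1 (fromOpt B (toOpt B (f.1 (fromOpt A x)))))
    rw [fromOpt_toOpt]

theorem stmt_0 :
    ∃ F : PFin ⥤ GammaTilde,
      (∀ A : PFin, F.obj A = A) ∧
      (∀ (A B : PFin) (α : A ⟶ B), HEq (F.map α) (twistHom α)) ∧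
      F.IsEquivalence := by
  refine ⟨twistF, fun A => rfl, fun A B α => HEq.refl _, ?_⟩
  have full : twistF.Full := by
    constructor
    intro A B g
    refine ⟨⟨fun a => fromOpt B (g.1 (toOpt A a)), ?_⟩, ?_⟩
    · exact (congrArg (fun y => fromOpt B (g.1 y)) (by simp [toOpt] : toOpt A A.pt = none)).trans (congrArg (fromOpt B) g.2)
    · apply Subtype.ext
      funext x
      show toOpt B (fromOpt B (g.1 (toOpt A (fromOpt A x)))) = g.1 x
      exact (toOpt_fromOpt B _).trans (congrArg g.1 (toOpt_fromOpt A x))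
  have faithful : twistF.Faithful := by
    constructor
    intro A B f g h
    apply Subtype.ext
    funext a
    have := congrArg (fun (m : (show GammaTilde from A) ⟶ B) => fromOpt B (m.1 (toOpt A a))) h
    simpa [twistF, twistHom, fromOpt_toOpt] using this
  have ess : twistF.EssSurj := ⟨fun A => ⟨A, ⟨Iso.refl _⟩⟩⟩
  exact { }
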